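/- Let X ≥ 1 be a random variable with E[X] < ∞ and let g : [0,∞) → [0,∞) be increasing with g(x)/x → ∞ as x → ∞. Then there exists a positive, increasing, convex function f with f(x)/x → ∞ as x → ∞, E[f(X)] < ∞, f(x)/g(x) → 0 as x → ∞, and such that y·f(x) ≤ f(x·y) ≤ 3·f(x)·f(y) for all x, y ≥ 1. -/

import Mathlib

open MeasureTheory Filter Finset
open scoped ENNReal NNReal
section aux

variable (a : ℕ → ℝ)

noncomputable def reluSum (x : ℝ) : ℝ := x + ∑' n, max (x - a n) 0

lemma cube_big {t : ℝ} (ht : 64 ≤ t) : 4096 * t ≤ t ^ 3 := by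
  have h0 : (0:ℝ) ≤ t := by linarith
  have h1 : 64 * t ≤ t * t := mul_le_mul_of_nonneg_right ht h0
  nlinarith [mul_le_mul_of_nonneg_left h1 h0]

lemma a_mono (h64 : ∀ n, (64:ℝ) ≤ a n) (hc : ∀ n, a n ^ 3 ≤ a (n + 1)) : Monotone a := by
  apply monotone_nat_of_le_succ
  intro n
  have h := h64 n
  have h2 := cube_big h
  have := hc n
  linarith

lemma a_grow (h64 : ∀ n, (64:ℝ) ≤ a n) (hc : ∀ n, a n ^ 3 ≤ a (n + 1)) : ∀ n, 64 * 2 ^ n ≤ a n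
  | 0 => by simpa using h64 0
  | n+1 => by
      have h1 := a_grow h64 hc n
      have h2 := hc n
      have h3 : (2:ℝ) * a n ≤ a n ^ 3 := by
        have := cube_big (h64 n); linarith [h64 n]
      calc (64:ℝ) * 2^(n+1) = 2 * (64 * 2^n) := by ring
      _ ≤ 2 * a n := by linarith
      _ ≤ a (n+1) := by linarith

lemma a_exists_gt (h64 : ∀ n, (64:ℝ) ≤ a n) (hc : ∀ n, a n ^ 3 ≤ a (n + 1)) (x : ℝ) : ∃ n, x < a n := by
  obtain ⟨n, hn⟩ := exists_nat_gt x
  refine ⟨n, lt_of_lt_of_le hn ?_⟩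
  have h1 : (n:ℝ) < 2^n := by exact_mod_cast Nat.lt_two_pow_self
  have h2 := a_grow a h64 hc n
  nlinarith [pow_pos (by norm_num : (0:ℝ) < 2) n]

lemma relu_summable (h64 : ∀ n, (64:ℝ) ≤ a n) (hc : ∀ n, a n ^ 3 ≤ a (n + 1)) (x : ℝ) : Summable fun n => max (x - a n) 0 := by
  obtain ⟨m, hm⟩ := a_exists_gt a h64 hc x
  apply summable_of_ne_finset_zero (s := Finset.range m)
  intro n hn
  have hmn : m ≤ n := by simpa [Finset.mem_range, not_lt] using hn
  have hx : x < a n := lt_of_lt_of_le hm (a_mono a h64 hc hmn)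
  exact max_eq_right (by linarith)

lemma relu_eq_sum (h64 : ∀ n, (64:ℝ) ≤ a n) (hc : ∀ n, a n ^ 3 ≤ a (n + 1)) (x : ℝ) (K : ℕ) (hK1 : ∀ k < K, a k ≤ x) (hK2 : x < a K) :
    reluSum a x = x + ∑ k ∈ Finset.range K, (x - a k) := by
  unfold reluSum
  congr 1
  rw [tsum_eq_sum (s := Finset.range K) ?_]
  · exact Finset.sum_congr rfl fun k hk =>
      max_eq_left (sub_nonneg.mpr (hK1 k (Finset.mem_range.mp hk)))
  · intro n hn
    have hmn : K ≤ n := by simpa [Finset.mem_range, not_lt] using hn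
    have hx : x < a n := lt_of_lt_of_le hK2 (a_mono a h64 hc hmn)
    exact max_eq_right (by linarith)

lemma relu_ge_self (h64 : ∀ n, (64:ℝ) ≤ a n) (hc : ∀ n, a n ^ 3 ≤ a (n + 1)) (x : ℝ) : x ≤ reluSum a x :=
  le_add_of_nonneg_right (tsum_nonneg fun n => le_max_right _ _)

lemma relu_le (h64 : ∀ n, (64:ℝ) ≤ a n) (hc : ∀ n, a n ^ 3 ≤ a (n + 1)) (x : ℝ) (hx : 0 ≤ x) (K : ℕ) (hK1 : ∀ k < K, a k ≤ x) (hK2 : x < a K) :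
    reluSum a x ≤ ((K:ℝ) + 1) * x := by
  rw [relu_eq_sum a h64 hc x K hK1 hK2]
  have : ∑ k ∈ range K, (x - a k) ≤ ∑ k ∈ range K, x := by
    apply Finset.sum_le_sum
    intro k _
    linarith [h64 k]
  simp only [Finset.sum_const, Finset.card_range, nsmul_eq_mul] at this
  linarith

lemma relu_ge_half (h64 : ∀ n, (64:ℝ) ≤ a n) (hc : ∀ n, a n ^ 3 ≤ a (n + 1)) (x : ℝ) (hx : 1 ≤ x) (K : ℕ) (hK1 : ∀ k < K, a k ≤ x) (hK2 : x < a K) :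
    x * ((K:ℝ) + 1) / 2 ≤ reluSum a x := by
  rw [relu_eq_sum a h64 hc x K hK1 hK2]
  match K with
  | 0 => simp; linarith
  | m+1 =>
    have hx64 : (64:ℝ) ≤ x := le_trans (h64 0) (hK1 0 (Nat.succ_pos m))
    have hsmall : ∀ k < m, a k ≤ x / 2 := by
      intro k hk
      have h1 : a k ^ 3 ≤ a (k+1) := hc k
      have h2 : a (k+1) ≤ x := hK1 (k+1) (by omega)
      have h3 := h64 k
      have h4 := cube_big h3
      linarith
    have hsum : ∑ k ∈ range m, (x - a k) ≥ ∑ k ∈ range m, (x / 2) := by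
      apply Finset.sum_le_sum
      intro k hk
      have := hsmall k (Finset.mem_range.mp hk)
      linarith
    rw [Finset.sum_range_succ]
    simp only [Finset.sum_const, Finset.card_range, nsmul_eq_mul] at hsum
    have hlast : 0 ≤ x - a m := sub_nonneg.mpr (hK1 m (by omega))
    push_cast
    nlinarith

lemma relu_mono (h64 : ∀ n, (64:ℝ) ≤ a n) (hc : ∀ n, a n ^ 3 ≤ a (n + 1)) : Monotone (reluSum a) := by
  intro x y hxy
  unfold reluSum
  have : ∑' n, max (x - a n) 0 ≤ ∑' n, max (y - a n) 0 := by
    apply Summable.tsum_le_tsum _ (relu_summable a h64 hc x) (relu_summable a h64 hc y)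
    intro n
    exact max_le_max (by linarith) le_rfl
  linarith

lemma relu_convex (h64 : ∀ n, (64:ℝ) ≤ a n) (hc : ∀ n, a n ^ 3 ≤ a (n + 1)) : ConvexOn ℝ Set.univ (reluSum a) := by
  refine ⟨convex_univ, fun x _ y _ p q hp hq hpq => ?_⟩
  simp only [smul_eq_mul]
  unfold reluSum
  have h1 : ∑' n, max (p * x + q * y - a n) 0
      ≤ ∑' n, (p * max (x - a n) 0 + q * max (y - a n) 0) := by
    apply Summable.tsum_le_tsum _ (relu_summable a h64 hc _)
    · exact (((relu_summable a h64 hc x).mul_left p).add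
        ((relu_summable a h64 hc y).mul_left q))
    · intro n
      have hx1 : p * (x - a n) ≤ p * max (x - a n) 0 :=
        mul_le_mul_of_nonneg_left (le_max_left _ _) hp
      have hy1 : q * (y - a n) ≤ q * max (y - a n) 0 :=
        mul_le_mul_of_nonneg_left (le_max_left _ _) hq
      have hx2 : 0 ≤ p * max (x - a n) 0 := mul_nonneg hp (le_max_right _ _)
      have hy2 : 0 ≤ q * max (y - a n) 0 := mul_nonneg hq (le_max_right _ _)
      apply max_le _ (by linarith)
      have : p * x + q * y - a n = p * (x - a n) + q * (y - a n) := by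
        have : p * a n + q * a n = a n := by
          have := congrArg (· * a n) hpq; simpa [add_mul] using this
        ring_nf
        ring_nf at this
        linarith
      linarith
  rw [Summable.tsum_add ((relu_summable a h64 hc x).mul_left p)
      ((relu_summable a h64 hc y).mul_left q), tsum_mul_left, tsum_mul_left] at h1
  ring_nf
  ring_nf at h1
  linarith


lemma a_sum_le (h64 : ∀ n, (64:ℝ) ≤ a n) (hc : ∀ n, a n ^ 3 ≤ a (n + 1)) :
    ∀ m : ℕ, ∑ k ∈ Finset.range (m+1), a k ≤ 2 * a m := by
  intro m
  induction m with
  | zero => simp; linarith [h64 0]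
  | succ m ih =>
    rw [Finset.sum_range_succ]
    have h1 : 2 * a m ≤ a (m+1) := by
      have := cube_big (h64 m)
      have := hc m
      linarith [h64 m]
    linarith

lemma a_sum_le' (h64 : ∀ n, (64:ℝ) ≤ a n) (hc : ∀ n, a n ^ 3 ≤ a (n + 1))
    (y : ℝ) (hy : 0 ≤ y) : ∀ P : ℕ, (∀ k < P, a k ≤ y) → ∑ k ∈ Finset.range P, a k ≤ 2 * y
  | 0, _ => by simp; linarith
  | m+1, h => by
      calc ∑ k ∈ Finset.range (m+1), a k ≤ 2 * a m := a_sum_le a h64 hc m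
      _ ≤ 2 * y := by linarith [h m (Nat.lt_succ_self m)]

lemma relu_mul_lb (h64 : ∀ n, (64:ℝ) ≤ a n) (hc : ∀ n, a n ^ 3 ≤ a (n + 1))
    (x y : ℝ) (hx : 1 ≤ x) (hy : 1 ≤ y) : y * reluSum a x ≤ reluSum a (x * y) := by
  unfold reluSum
  have hterm : ∀ n, y * max (x - a n) 0 ≤ max (x * y - a n) 0 := by
    intro n
    rcases le_or_gt (a n) x with h | h
    · rw [max_eq_left (by linarith)]
      refine le_max_of_le_left ?_
      have han : (0:ℝ) ≤ a n := by linarith [h64 n]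
      nlinarith
    · rw [max_eq_right (by linarith)]
      simp [le_max_right]
  have hsum : y * ∑' n, max (x - a n) 0 ≤ ∑' n, max (x * y - a n) 0 := by
    rw [← tsum_mul_left]
    exact Summable.tsum_le_tsum hterm ((relu_summable a h64 hc x).mul_left y)
      (relu_summable a h64 hc (x * y))
  nlinarith [hsum]

lemma relu_mul_ub_aux (h64 : ∀ n, (64:ℝ) ≤ a n) (hc : ∀ n, a n ^ 3 ≤ a (n + 1))
    (x y : ℝ) (hx : 1 ≤ x) (hxy : x ≤ y) :
    reluSum a (x * y) ≤ 3 * reluSum a x * reluSum a y := by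
  have hy : (1:ℝ) ≤ y := hx.trans hxy
  have hy0 : (0:ℝ) < y := by linarith
  have hx0 : (0:ℝ) < x := by linarith
  have hxy1 : (1:ℝ) ≤ x * y := one_le_mul_of_one_le_of_one_le hx hy
  set P := Nat.find (a_exists_gt a h64 hc y) with hP
  have hP2 : y < a P := Nat.find_spec (a_exists_gt a h64 hc y)
  have hP1 : ∀ k < P, a k ≤ y := fun k hk => not_lt.mp (Nat.find_min (a_exists_gt a h64 hc y) hk)
  have hfy : y ≤ reluSum a y := relu_ge_self a h64 hc y
  have hfx : x ≤ reluSum a x := relu_ge_self a h64 hc x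
  rcases le_or_gt (a P) (x * y) with hB | hA
  · -- Case B : a P ≤ x y
    have hK1 : ∀ k < P + 1, a k ≤ x * y := by
      intro k hk
      rcases Nat.lt_succ_iff_lt_or_eq.mp hk with h | h
      · calc a k ≤ y := hP1 k h
        _ ≤ x * y := le_mul_of_one_le_left (by linarith) hx
      · rw [h]; exact hB
    have hK2 : x * y < a (P + 1) := by
      have h1 : a P ^ 3 ≤ a (P + 1) := hc P
      have h2 : y ^ 3 < a P ^ 3 := by
        apply pow_lt_pow_left₀ hP2 (by linarith) (by norm_num)
      have h3 : x * y ≤ y ^ 3 := by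
        have h4 : x ≤ y * y := by nlinarith
        have h5 := mul_le_mul_of_nonneg_right h4 hy0.le
        nlinarith [h5]
      linarith
    have hub : reluSum a (x * y) ≤ ((P:ℝ) + 1 + 1) * (x * y) := by
      have := relu_le a h64 hc (x * y) (by linarith) (P + 1) hK1 hK2
      push_cast at this ⊢
      linarith
    rcases Nat.eq_zero_or_pos P with h0 | hPpos
    · -- P = 0
      rw [h0] at hub
      push_cast at hub
      nlinarith [hfx, hfy]
    · have hlb : y * ((P:ℝ) + 1) / 2 ≤ reluSum a y := relu_ge_half a h64 hc y hy P hP1 hP2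
      have hp1 : (1:ℝ) ≤ (P:ℝ) := by exact_mod_cast hPpos
      nlinarith [hfx, hfy, hlb, hub]
  · -- Case A : x * y < a P
    have hK1 : ∀ k < P, a k ≤ x * y := by
      intro k hk
      calc a k ≤ y := hP1 k hk
      _ ≤ x * y := le_mul_of_one_le_left (by linarith) hx
    have hrepxy := relu_eq_sum a h64 hc (x * y) P hK1 hA
    have hrepy := relu_eq_sum a h64 hc y P hP1 hP2
    have hS : ∑ k ∈ Finset.range P, a k ≤ 2 * y :=
      a_sum_le' a h64 hc y (by linarith) P hP1
    have hS0 : 0 ≤ ∑ k ∈ Finset.range P, a k :=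
      Finset.sum_nonneg fun k _ => by linarith [h64 k]
    have hsplit : ∑ k ∈ Finset.range P, (x * y - a k)
        = x * (∑ k ∈ Finset.range P, (y - a k)) + (x - 1) * ∑ k ∈ Finset.range P, a k := by
      rw [Finset.mul_sum, Finset.mul_sum, ← Finset.sum_add_distrib]
      apply Finset.sum_congr rfl
      intro k _
      ring
    have hA0 : 0 ≤ ∑ k ∈ Finset.range P, (y - a k) :=
      Finset.sum_nonneg fun k hk => by linarith [hP1 k (Finset.mem_range.mp hk)]
    have hfyA : reluSum a y = y + ∑ k ∈ Finset.range P, (y - a k) := hrepy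
    nlinarith [hrepxy, hsplit, hS, hS0, hA0, hfx, hfy]

lemma relu_mul_ub (h64 : ∀ n, (64:ℝ) ≤ a n) (hc : ∀ n, a n ^ 3 ≤ a (n + 1))
    (x y : ℝ) (hx : 1 ≤ x) (hy : 1 ≤ y) :
    reluSum a (x * y) ≤ 3 * reluSum a x * reluSum a y := by
  rcases le_total x y with h | h
  · exact relu_mul_ub_aux a h64 hc x y hx h
  · rw [mul_comm x y]
    calc reluSum a (y * x) ≤ 3 * reluSum a y * reluSum a x := relu_mul_ub_aux a h64 hc y x hy h
    _ = 3 * reluSum a x * reluSum a y := by ring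

end aux

/-- strengthened de la Vallée–Poussin criterion. -/
theorem stmt6 {Ω : Type*} [MeasurableSpace Ω] (μ : Measure Ω) [IsProbabilityMeasure μ]
    (X : Ω → ℝ) (hX1 : ∀ ω, 1 ≤ X ω) (hXint : Integrable X μ)
    (g : ℝ → ℝ) (hg0 : ∀ x, 0 ≤ x → 0 ≤ g x) (hgmono : MonotoneOn g (Set.Ici 0))
    (hginf : Tendsto (fun x => g x / x) atTop atTop) :
    ∃ f : ℝ → ℝ,
      (∀ x ∈ Set.Ici (1 : ℝ), 0 < f x) ∧
      MonotoneOn f (Set.Ici 1) ∧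
      ConvexOn ℝ (Set.Ici 1) f ∧
      Tendsto (fun x => f x / x) atTop atTop ∧
      Integrable (fun ω => f (X ω)) μ ∧
      Tendsto (fun x => f x / g x) atTop (nhds 0) ∧
      (∀ x y : ℝ, 1 ≤ x → 1 ≤ y → y * f x ≤ f (x * y) ∧ f (x * y) ≤ 3 * f x * f y) := by
  classical
  -- thresholds for g
  have hGth' : ∀ C : ℝ, ∃ M : ℝ, ∀ x, M ≤ x → C ≤ g x / x := by
    intro C
    have h := (tendsto_atTop.mp hginf) C
    rw [eventually_atTop] at h
    obtain ⟨M, hM⟩ := h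
    exact ⟨M, fun x hx => hM x hx⟩
  choose Gth hGth using hGth'
  -- tail thresholds
  have hposint : ∀ b : ℝ, Integrable (fun ω => max (X ω - b) 0) μ := fun b =>
    (hXint.sub (integrable_const b)).pos_part
  have htail0 : Tendsto (fun n : ℕ => ∫ ω, max (X ω - n) 0 ∂μ) atTop (nhds 0) := by
    have h := tendsto_integral_of_dominated_convergence (μ := μ)
      (F := fun (n : ℕ) ω => max (X ω - n) 0) (f := fun _ => (0:ℝ))
      (bound := fun ω => |X ω|)
      (fun n => (hposint n).1)
      hXint.abs
      (fun n => ae_of_all _ fun ω => by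
        rw [Real.norm_eq_abs, abs_of_nonneg (le_max_right _ _)]
        have h1 := hX1 ω
        have : max (X ω - n) 0 ≤ X ω := by
          apply max_le (by linarith [Nat.cast_nonneg (α := ℝ) n]) (by linarith)
        calc max (X ω - (n:ℝ)) 0 ≤ X ω := this
        _ ≤ |X ω| := le_abs_self _)
      (ae_of_all _ fun ω => by
        apply tendsto_atTop_of_eventually_const (i₀ := ⌈X ω⌉₊)
        intro n hn
        have : X ω ≤ (n:ℝ) := le_trans (Nat.le_ceil _) (by exact_mod_cast hn)
        exact max_eq_right (by linarith))
    simpa using h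
  have hTth' : ∀ k : ℕ, ∃ M : ℝ, ∀ b, M ≤ b → ∫ ω, max (X ω - b) 0 ∂μ ≤ (1/2:ℝ)^k := by
    intro k
    have hev := htail0.eventually (gt_mem_nhds (show (0:ℝ) < (1/2)^k by positivity))
    rw [eventually_atTop] at hev
    obtain ⟨n, hn⟩ := hev
    refine ⟨n, fun b hb => ?_⟩
    have hmono : ∫ ω, max (X ω - b) 0 ∂μ ≤ ∫ ω, max (X ω - n) 0 ∂μ :=
      integral_mono (hposint b) (hposint n) fun ω => max_le_max (by linarith) le_rfl
    exact hmono.trans (le_of_lt (hn n le_rfl))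
  choose Tth hTth using hTth'
  -- the sequence a
  set c : ℕ → ℝ := fun n => ((n:ℝ) + 2) * 2 ^ n with hc_def
  set a : ℕ → ℝ := fun n => Nat.rec (max 64 (max (Gth (c 0)) (Tth 0)))
    (fun m prev => max (prev ^ 3) (max 64 (max (Gth (c (m+1))) (Tth (m+1))))) n with ha_def
  have ha0 : a 0 = max 64 (max (Gth (c 0)) (Tth 0)) := rfl
  have haS : ∀ m, a (m+1) = max ((a m)^3) (max 64 (max (Gth (c (m+1))) (Tth (m+1)))) :=
    fun m => rfl
  have h64 : ∀ n, (64:ℝ) ≤ a n := by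
    intro n
    cases n with
    | zero => rw [ha0]; exact le_max_left _ _
    | succ m => rw [haS]; exact le_max_of_le_right (le_max_left _ _)
  have hc : ∀ n, a n ^ 3 ≤ a (n + 1) := fun n => by rw [haS]; exact le_max_left _ _
  have haG : ∀ n, Gth (c n) ≤ a n := by
    intro n
    cases n with
    | zero => rw [ha0]; exact le_max_of_le_right (le_max_left _ _)
    | succ m => rw [haS]; exact le_max_of_le_right (le_max_of_le_right (le_max_left _ _))
  have haT : ∀ n, Tth n ≤ a n := by
    intro n
    cases n with
    | zero => rw [ha0]; exact le_max_of_le_right (le_max_right _ _)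
    | succ m => rw [haS]; exact le_max_of_le_right (le_max_of_le_right (le_max_right _ _))
  have hGa : ∀ n (x : ℝ), a n ≤ x → c n ≤ g x / x := fun n x hx =>
    hGth (c n) x (le_trans (haG n) hx)
  have hTa : ∀ n, ∫ ω, max (X ω - a n) 0 ∂μ ≤ (1/2:ℝ)^n := fun n =>
    hTth n (a n) (haT n)
  refine ⟨reluSum a, ?_, ?_, ?_, ?_, ?_, ?_, ?_⟩
  · -- positivity
    intro x hx
    have := relu_ge_self a h64 hc x
    have hx1 : (1:ℝ) ≤ x := hx
    linarith
  · exact (relu_mono a h64 hc).monotoneOn _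
  · exact (relu_convex a h64 hc).subset (Set.subset_univ _) (convex_Ici 1)
  · -- f x / x → ∞
    rw [tendsto_atTop]
    intro C
    obtain ⟨m, hm⟩ := exists_nat_ge (2 * C)
    rw [eventually_atTop]
    refine ⟨max (a m) 1, fun x hx => ?_⟩
    have hx1 : (1:ℝ) ≤ x := le_trans (le_max_right _ _) hx
    have hxam : a m ≤ x := le_trans (le_max_left _ _) hx
    have hex := a_exists_gt a h64 hc x
    have hK2 : x < a (Nat.find hex) := Nat.find_spec hex
    have hK1 : ∀ k < Nat.find hex, a k ≤ x := fun k hk => not_lt.mp (Nat.find_min hex hk)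
    have hmK : m < Nat.find hex := by
      by_contra h
      push_neg at h
      exact absurd (le_trans (a_mono a h64 hc h) hxam) (not_le.mpr hK2)
    have hlb := relu_ge_half a h64 hc x hx1 (Nat.find hex) hK1 hK2
    have hx0 : (0:ℝ) < x := by linarith
    rw [le_div_iff₀ hx0]
    have hcast : (m:ℝ) + 1 ≤ (Nat.find hex : ℝ) := by exact_mod_cast hmK
    nlinarith [hlb]
  · -- integrability
    have hmeas : AEStronglyMeasurable (fun ω => reluSum a (X ω)) μ :=
      ((relu_mono a h64 hc).measurable.comp_aemeasurable
        hXint.1.aemeasurable).aestronglyMeasurable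
    refine ⟨hmeas, ?_⟩
    have hnn : ∀ ω, (0:ℝ) ≤ reluSum a (X ω) := fun ω => by
      linarith [relu_ge_self a h64 hc (X ω), hX1 ω]
    rw [hasFiniteIntegral_iff_ofReal (ae_of_all _ hnn)]
    have hbound : ∀ ω, ENNReal.ofReal (reluSum a (X ω)) ≤
        ENNReal.ofReal (X ω) + ∑' n, ENNReal.ofReal (max (X ω - a n) 0) := by
      intro ω
      have : reluSum a (X ω) = X ω + ∑' n, max (X ω - a n) 0 := rfl
      rw [this, ENNReal.ofReal_add (by linarith [hX1 ω])
          (tsum_nonneg fun n => le_max_right _ _),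
        ENNReal.ofReal_tsum_of_nonneg (fun n => le_max_right _ _)
          (relu_summable a h64 hc (X ω))]
    have hXfin : ∫⁻ ω, ENNReal.ofReal (X ω) ∂μ < ⊤ :=
      (hasFiniteIntegral_iff_ofReal (ae_of_all _ fun ω => by show (0:ℝ) ≤ X ω; linarith [hX1 ω])).mp hXint.2
    have haemeas : ∀ n : ℕ, AEMeasurable (fun ω => ENNReal.ofReal (max (X ω - a n) 0)) μ :=
      fun n => ENNReal.measurable_ofReal.comp_aemeasurable (hposint (a n)).1.aemeasurable
    calc ∫⁻ ω, ENNReal.ofReal (reluSum a (X ω)) ∂μ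
        ≤ ∫⁻ ω, (ENNReal.ofReal (X ω) + ∑' n, ENNReal.ofReal (max (X ω - a n) 0)) ∂μ :=
          lintegral_mono hbound
      _ = ∫⁻ ω, ENNReal.ofReal (X ω) ∂μ
          + ∫⁻ ω, ∑' n, ENNReal.ofReal (max (X ω - a n) 0) ∂μ :=
          lintegral_add_left' (ENNReal.measurable_ofReal.comp_aemeasurable
            hXint.1.aemeasurable) _
      _ = ∫⁻ ω, ENNReal.ofReal (X ω) ∂μ
          + ∑' n, ∫⁻ ω, ENNReal.ofReal (max (X ω - a n) 0) ∂μ := by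
          rw [lintegral_tsum haemeas]
      _ ≤ ∫⁻ ω, ENNReal.ofReal (X ω) ∂μ + ∑' n : ℕ, ENNReal.ofReal ((1/2:ℝ)^n) := by
          gcongr with n
          rw [← ofReal_integral_eq_lintegral_ofReal (hposint (a n))
            (ae_of_all _ fun ω => le_max_right _ _)]
          exact ENNReal.ofReal_le_ofReal (hTa n)
      _ < ⊤ := by
          apply ENNReal.add_lt_top.mpr
          constructor
          · exact hXfin
          · have heq : ∀ n : ℕ, ENNReal.ofReal ((1/2:ℝ)^n) = (2⁻¹ : ℝ≥0∞)^n := by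
              intro n
              rw [ENNReal.ofReal_pow (by norm_num)]
              congr 1
              rw [one_div, ENNReal.ofReal_inv_of_pos (by norm_num : (0:ℝ) < 2),
                show ENNReal.ofReal 2 = 2 from by simp [ENNReal.ofReal_ofNat]]
            have h2 : ∑' n : ℕ, ENNReal.ofReal ((1/2:ℝ)^n) = (1 - 2⁻¹ : ℝ≥0∞)⁻¹ := by
              rw [tsum_congr heq, ENNReal.tsum_geometric]
            rw [h2]
            apply ENNReal.inv_lt_top.mpr
            rw [tsub_pos_iff_lt]
            norm_num
  · -- f / g → 0
    rw [Metric.tendsto_nhds]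
    intro ε hε
    obtain ⟨m, hm⟩ : ∃ m : ℕ, (1/2:ℝ)^m < ε := exists_pow_lt_of_lt_one hε (by norm_num)
    rw [eventually_atTop]
    refine ⟨max (a m) 1, fun x hx => ?_⟩
    have hx1 : (1:ℝ) ≤ x := le_trans (le_max_right _ _) hx
    have hx0 : (0:ℝ) < x := by linarith
    have hxam : a m ≤ x := le_trans (le_max_left _ _) hx
    have hex := a_exists_gt a h64 hc x
    have hK2 : x < a (Nat.find hex) := Nat.find_spec hex
    have hK1 : ∀ k < Nat.find hex, a k ≤ x := fun k hk => not_lt.mp (Nat.find_min hex hk)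
    have hmK : m < Nat.find hex := by
      by_contra h
      push_neg at h
      exact absurd (le_trans (a_mono a h64 hc h) hxam) (not_le.mpr hK2)
    obtain ⟨j, hj⟩ : ∃ j, Nat.find hex = j + 1 := ⟨Nat.find hex - 1, by omega⟩
    have hmj : m ≤ j := by omega
    have haj : a j ≤ x := hK1 j (by omega)
    have hgx : ((j:ℝ) + 2) * 2^j ≤ g x / x := hGa j x haj
    have h2pos : (0:ℝ) < 2^j := by positivity
    have hgpos : (0:ℝ) < g x := by
      have h1 : (0:ℝ) < ((j:ℝ) + 2) * 2^j := by positivity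
      have := (le_div_iff₀ hx0).mp hgx
      nlinarith
    have hub := relu_le a h64 hc x (by linarith) (Nat.find hex) hK1 hK2
    have hfnn : 0 ≤ reluSum a x := by linarith [relu_ge_self a h64 hc x]
    rw [dist_zero_right, Real.norm_eq_abs, abs_of_nonneg (div_nonneg hfnn hgpos.le)]
    have hhalf : (1/2:ℝ)^j * 2^j = 1 := by
      rw [← mul_pow]; norm_num
    have hdiv : reluSum a x / g x ≤ (1/2:ℝ)^j := by
      rw [div_le_iff₀ hgpos]
      have hgx' : ((j:ℝ) + 2) * 2^j * x ≤ g x := by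
        have := (le_div_iff₀ hx0).mp hgx
        linarith
      calc reluSum a x ≤ ((Nat.find hex : ℝ) + 1) * x := hub
      _ = ((j:ℝ) + 2) * x := by rw [hj]; push_cast; ring
      _ = (1/2:ℝ)^j * (((j:ℝ) + 2) * 2^j * x) := by
          rw [show (1/2:ℝ)^j * (((j:ℝ) + 2) * 2^j * x)
            = ((1/2:ℝ)^j * 2^j) * (((j:ℝ) + 2) * x) by ring, hhalf, one_mul]
      _ ≤ (1/2:ℝ)^j * g x := by
          apply mul_le_mul_of_nonneg_left hgx' (by positivity)
    have hmono : (1/2:ℝ)^j ≤ (1/2:ℝ)^m :=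
      pow_le_pow_of_le_one (by norm_num) (by norm_num) hmj
    linarith
  · -- multiplicative bounds
    intro x y hx hy
    exact ⟨relu_mul_lb a h64 hc x y hx hy, relu_mul_ub a h64 hc x y hx hy⟩
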